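/- Let B be a bicategory, X and Y objects, and (f, g, φ, γ) a 2-condensation of X onto Y: f : X ⟶ Y, g : Y ⟶ X, φ : g ≫ f ⟶ 𝟙 Y, γ : 𝟙 Y ⟶ g ≫ f with γ ≫ φ = 𝟙 (𝟙 Y). Suppose f admits a right adjoint h : Y ⟶ X, with adjunction data unit η : 𝟙 X ⟶ f ≫ h and counit ε : h ≫ f ⟶ 𝟙 Y. Define γ̃ : 𝟙 Y ⟶ h ≫ f as the composite: γ, then g ◁ (λ_ f).inv, then g ◁ (η ▷ f), then the associator 2-isomorphisms rearranging g ≫ ((f ≫ h) ≫ f) into (g ≫ f) ≫ (h ≫ f), then φ ▷ (h ≫ f), then (λ_ (h ≫ f)).hom. Then γ̃ ≫ ε = 𝟙 (𝟙 Y); consequently (f, h, ε, γ̃) is again a 2-condensation of X onto Y, whose 2-morphism h ≫ f ⟶ 𝟙 Y is the counit of the adjunction f ⊣ h. -/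

import Mathlib

open CategoryTheory Bicategory

/-- A 2-condensation whose first leg `f` admits a right adjoint `h` can be promoted to a
unital condensation with legs `f` and `h`: the 2-morphism `γ̃ : 𝟙 Y ⟶ h ≫ f` built from
`γ`, the unit `η`, and `φ` is a section of the counit `ε`. -/
theorem unital_condensation_of_right_adjoint {B : Type*} [Bicategory B] {X Y : B}
    (f : X ⟶ Y) (g : Y ⟶ X) (φ : g ≫ f ⟶ 𝟙 Y) (γ : 𝟙 Y ⟶ g ≫ f)
    (hγφ : γ ≫ φ = 𝟙 (𝟙 Y))
    (h : Y ⟶ X) (η : 𝟙 X ⟶ f ≫ h) (ε' : h ≫ f ⟶ 𝟙 Y)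
    (left_triangle :
      (λ_ f).inv ≫ η ▷ f ≫ (α_ f h f).hom ≫ f ◁ ε' ≫ (ρ_ f).hom = 𝟙 f)
    (right_triangle :
      (ρ_ h).inv ≫ h ◁ η ≫ (α_ h f h).inv ≫ ε' ▷ h ≫ (λ_ h).hom = 𝟙 h) :
    (γ ≫ g ◁ (λ_ f).inv ≫ g ◁ (η ▷ f) ≫ g ◁ (α_ f h f).hom ≫
      (α_ g f (h ≫ f)).inv ≫ φ ▷ (h ≫ f) ≫ (λ_ (h ≫ f)).hom) ≫ ε' = 𝟙 (𝟙 Y) := by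
  have key : g ◁ (λ_ f).inv ≫ g ◁ (η ▷ f) ≫ g ◁ (α_ f h f).hom ≫
      (α_ g f (h ≫ f)).inv ≫ φ ▷ (h ≫ f) ≫ ((λ_ (h ≫ f)).hom ≫ ε') = φ := by
    rw [← leftUnitor_naturality ε', ← whisker_exchange_assoc]
    rw [← associator_inv_naturality_right_assoc, unitors_equal, rightUnitor_naturality,
      ← whiskerLeft_rightUnitor_assoc]
    simp only [← Bicategory.whiskerLeft_comp_assoc]
    rw [left_triangle, Bicategory.whiskerLeft_id, Category.id_comp]
  simp only [Category.assoc] at key ⊢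
  rw [key, hγφ]
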